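/- Let f : ℝ^m → ℝ^n be linear, f(θ) = Φθ, and let L(θ) = Σᵢ log(1 + exp(-yᵢ(Φθ)ᵢ)) + (λ/2)‖θ‖² with λ > 0 and yᵢ ∈ {-1,+1}. Then min_θ L(θ) = max_{α ∈ (0,1)^n} [Σᵢ H(αᵢ) - (1/(2λ))·αᵀ Y Φ Φᵀ Yᵀ α], where H is binary entropy and Y = diag(y). -/

import Mathlib

open Matrix

noncomputable def Hb (a : ℝ) : ℝ := -a * Real.log a - (1 - a) * Real.log (1 - a)

lemma Hb_cont : Continuous Hb := by
  have h1 : Continuous fun a : ℝ => a * Real.log a := Real.continuous_mul_log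
  have h2 : Continuous fun a : ℝ => (1-a) * Real.log (1-a) :=
    h1.comp (continuous_const.sub continuous_id)
  have : Hb = fun a => -(a * Real.log a) - (1-a) * Real.log (1-a) := by
    funext a; simp [Hb]
  rw [this]; exact (h1.neg).sub h2

lemma Hb_deriv (a : ℝ) (ha : a ∈ Set.Ioo (0:ℝ) 1) :
    HasDerivAt Hb (Real.log (1-a) - Real.log a) a := by
  obtain ⟨h0, h1⟩ := ha
  have ha' : a ≠ 0 := ne_of_gt h0
  have h1a : (1:ℝ) - a ≠ 0 := by intro h; linarith [(by linarith : (0:ℝ) < 1 - a)]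
  have d1 : HasDerivAt (fun x : ℝ => x * Real.log x) (Real.log a + 1) a :=
    Real.hasDerivAt_mul_log ha'
  have d2 : HasDerivAt (fun x : ℝ => (1-x) * Real.log (1-x))
      ((Real.log (1-a) + 1) * (-1)) a := by
    have inner : HasDerivAt (fun x : ℝ => 1 - x) (-1) a := by
      simpa using (hasDerivAt_id a).const_sub 1
    exact (Real.hasDerivAt_mul_log h1a).comp a inner
  have : HasDerivAt (fun x => -(x * Real.log x) - (1-x) * Real.log (1-x))
      (-(Real.log a + 1) - (Real.log (1-a) + 1) * (-1)) a := d1.neg.sub d2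
  have he : Hb = fun x => -(x * Real.log x) - (1-x) * Real.log (1-x) := by
    funext x; simp [Hb]
  rw [he]
  convert this using 1; ring

lemma fenchel (t a : ℝ) (ha : a ∈ Set.Ioo (0:ℝ) 1) :
    Hb a - a * t ≤ Real.log (1 + Real.exp (-t)) := by
  obtain ⟨h0, h1⟩ := ha
  have h1a : 0 < 1 - a := by linarith
  have key := strictConcaveOn_log_Ioi.concaveOn.2
    (Set.mem_Ioi.2 (show (0:ℝ) < 1/(1-a) by positivity))
    (Set.mem_Ioi.2 (show (0:ℝ) < Real.exp (-t) / a by positivity))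
    (le_of_lt h1a) (le_of_lt h0) (by ring)
  have e1 : (1 - a) • (1/(1-a)) + a • (Real.exp (-t) / a) = 1 + Real.exp (-t) := by
    simp only [smul_eq_mul]; field_simp
  have e2 : Real.log (1/(1-a)) = -Real.log (1-a) := by
    rw [one_div, Real.log_inv]
  have e3 : Real.log (Real.exp (-t) / a) = -t - Real.log a := by
    rw [Real.log_div (Real.exp_ne_zero _) (ne_of_gt h0), Real.log_exp]
  rw [e1] at key
  have : (1 - a) • Real.log (1/(1-a)) + a • Real.log (Real.exp (-t)/a) = Hb a - a * t := by
    rw [e2, e3, smul_eq_mul, smul_eq_mul, Hb]; ring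
  linarith [key, this.symm.le]

lemma fenchel_eq (a : ℝ) (ha : a ∈ Set.Ioo (0:ℝ) 1) :
    Real.log (1 + Real.exp (-(Real.log (1-a) - Real.log a)))
      = Hb a - a * (Real.log (1-a) - Real.log a) := by
  obtain ⟨h0, h1⟩ := ha
  have h1a : 0 < 1 - a := by linarith
  have he : Real.exp (-(Real.log (1-a) - Real.log a)) = a / (1 - a) := by
    rw [neg_sub, Real.exp_sub, Real.exp_log h0, Real.exp_log h1a]
  rw [he]
  have h2 : 1 + a / (1 - a) = 1 / (1 - a) := by field_simp; ring
  rw [h2, one_div, Real.log_inv, Hb]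
  ring

lemma bdry0 (A B : ℝ) (hA : 0 ≤ A) :
    ∃ s ∈ Set.Ioo (0:ℝ) 1, Hb 0 - (A * 0^2 + B * 0) < Hb s - (A * s^2 + B * s) := by
  set s : ℝ := min (1/2) (Real.exp (-(A+B)-1)) with hs
  have hsp : 0 < s := lt_min (by norm_num) (Real.exp_pos _)
  have hs1 : s < 1 := lt_of_le_of_lt (min_le_left _ _) (by norm_num)
  refine ⟨s, ⟨hsp, hs1⟩, ?_⟩
  have h0 : Hb 0 = 0 := by simp [Hb]
  have hlog : Real.log s ≤ -(A+B)-1 := by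
    calc Real.log s ≤ Real.log (Real.exp (-(A+B)-1)) :=
          Real.log_le_log hsp (min_le_right _ _)
      _ = -(A+B)-1 := Real.log_exp _
  have hH : -s * Real.log s ≤ Hb s := by
    have : 0 ≤ -((1-s) * Real.log (1-s)) := by
      have : Real.log (1-s) ≤ 0 := Real.log_nonpos (by linarith) (by linarith)
      nlinarith
    simp only [Hb]; linarith
  have key : 0 < -s * Real.log s - (A * s^2 + B * s) := by
    have h1 : A * s^2 ≤ A * s := by
      nlinarith [mul_nonneg (mul_nonneg hA hsp.le) (show (0:ℝ) ≤ 1 - s by linarith)]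
    have h2 : s * (A + B + 1) ≤ s * (-Real.log s) := by
      apply mul_le_mul_of_nonneg_left _ hsp.le; linarith
    nlinarith
  rw [h0]; simp only [mul_zero, pow_two, zero_mul, mul_zero]
  nlinarith [hH]

lemma bdry1 (A B : ℝ) (hA : 0 ≤ A) :
    ∃ s ∈ Set.Ioo (0:ℝ) 1, Hb 1 - (A * 1^2 + B * 1) < Hb s - (A * s^2 + B * s) := by
  set e : ℝ := min (1/2) (Real.exp (B-1)) with he
  have hep : 0 < e := lt_min (by norm_num) (Real.exp_pos _)
  have he1 : e < 1 := lt_of_le_of_lt (min_le_left _ _) (by norm_num)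
  refine ⟨1 - e, ⟨by linarith, by linarith⟩, ?_⟩
  have h1 : Hb 1 = 0 := by simp [Hb]
  have hlog : Real.log e ≤ B - 1 := by
    calc Real.log e ≤ Real.log (Real.exp (B-1)) := Real.log_le_log hep (min_le_right _ _)
      _ = B - 1 := Real.log_exp _
  have hHsym : Hb (1 - e) = -(1-e) * Real.log (1-e) - e * Real.log e := by
    simp only [Hb]; ring_nf
  have hH : -e * Real.log e ≤ Hb (1-e) := by
    have : 0 ≤ -((1-e) * Real.log (1-e)) := by
      have : Real.log (1-e) ≤ 0 := Real.log_nonpos (by linarith) (by linarith)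
      nlinarith
    rw [hHsym]; linarith
  rw [h1]
  have hq : A * (1-e)^2 ≤ A * 1^2 := by
    nlinarith [mul_nonneg (mul_nonneg hA hep.le) (show (0:ℝ) ≤ 2 - e by linarith)]
  have h2 : e * 1 ≤ e * (B - Real.log e) := by
    apply mul_le_mul_of_nonneg_left _ hep.le; linarith
  nlinarith [hH]

lemma quad_eq {n m : ℕ} (Φ : Matrix (Fin n) (Fin m) ℝ) (y α : Fin n → ℝ) :
    α ⬝ᵥ ((Matrix.diagonal y * Φ * Φᵀ * (Matrix.diagonal y)ᵀ) *ᵥ α)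
      = ∑ j, (∑ i, y i * α i * Φ i j)^2 := by
  have h : (Matrix.diagonal y * Φ * Φᵀ * (Matrix.diagonal y)ᵀ) *ᵥ α
      = Matrix.diagonal y *ᵥ (Φ *ᵥ (Φᵀ *ᵥ (Matrix.diagonal y *ᵥ α))) := by
    rw [Matrix.diagonal_transpose, ← Matrix.mulVec_mulVec, ← Matrix.mulVec_mulVec,
      ← Matrix.mulVec_mulVec]
  rw [h]
  set β : Fin n → ℝ := fun i => y i * α i with hβ
  have hd : Matrix.diagonal y *ᵥ α = β := by
    funext i; simp [Matrix.mulVec_diagonal, hβ]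
  rw [hd]
  set w : Fin m → ℝ := fun j => ∑ i, Φ i j * β i with hw
  have hw' : Φᵀ *ᵥ β = w := by
    funext j; simp [Matrix.mulVec, dotProduct, Matrix.transpose_apply, hw]
  rw [hw']
  have : α ⬝ᵥ (Matrix.diagonal y *ᵥ (Φ *ᵥ w)) = ∑ i, β i * ∑ j, Φ i j * w j := by
    refine Finset.sum_congr rfl fun i _ => ?_
    rw [Matrix.mulVec_diagonal]
    simp only [Matrix.mulVec, dotProduct, hβ]
    ring
  rw [this]
  have : ∑ i, β i * ∑ j, Φ i j * w j = ∑ j, w j * w j := by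
    simp_rw [Finset.mul_sum]
    rw [Finset.sum_comm]
    refine Finset.sum_congr rfl fun j _ => ?_
    rw [hw, Finset.sum_mul]
    exact Finset.sum_congr rfl fun i _ => by ring
  rw [this]
  refine Finset.sum_congr rfl fun j _ => ?_
  rw [sq, hw]
  congr 1 <;> exact Finset.sum_congr rfl fun i _ => by ring

theorem stmt_15 {n m : ℕ} (Φ : Matrix (Fin n) (Fin m) ℝ) (y : Fin n → ℝ)
    (hy : ∀ i, y i = 1 ∨ y i = -1) (lam : ℝ) (hlam : 0 < lam) :
    let Y := Matrix.diagonal y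
    let L : (Fin m → ℝ) → ℝ := fun θ =>
      (∑ i, Real.log (1 + Real.exp (-(y i * (Φ *ᵥ θ) i)))) +
        lam / 2 * ∑ j, θ j ^ 2
    let H : ℝ → ℝ := fun a => -a * Real.log a - (1 - a) * Real.log (1 - a)
    let G : (Fin n → ℝ) → ℝ := fun α =>
      (∑ i, H (α i)) - 1 / (2 * lam) * (α ⬝ᵥ ((Y * Φ * Φᵀ * Yᵀ) *ᵥ α))
    ∃ θ₀ : Fin m → ℝ, ∃ α₀ : Fin n → ℝ,
      IsLeast (Set.range L) (L θ₀) ∧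
      (∀ i, α₀ i ∈ Set.Ioo (0:ℝ) 1) ∧
      IsGreatest (G '' {α | ∀ i, α i ∈ Set.Ioo (0:ℝ) 1}) (G α₀) ∧
      L θ₀ = G α₀ := by
  intro Y L H G
  classical
  have hlam' : lam ≠ 0 := ne_of_gt hlam
  set F : (Fin n → ℝ) → ℝ := fun α =>
    (∑ i, Hb (α i)) - 1/(2*lam) * ∑ j, (∑ i, y i * α i * Φ i j)^2 with hF
  have hGF : ∀ α : Fin n → ℝ, G α = F α := by
    intro α
    show (∑ i, Hb (α i)) - 1/(2*lam) *
        (α ⬝ᵥ ((Matrix.diagonal y * Φ * Φᵀ * (Matrix.diagonal y)ᵀ) *ᵥ α)) = F α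
    rw [quad_eq, hF]
  -- continuity and compactness
  have hFcont : Continuous F := by
    rw [hF]
    apply Continuous.sub
    · exact continuous_finset_sum _ (fun i _ => Hb_cont.comp (continuous_apply i))
    · apply Continuous.mul continuous_const
      apply continuous_finset_sum
      intro j _
      exact (continuous_finset_sum _ (fun i _ =>
        ((continuous_const.mul (continuous_apply i)).mul continuous_const))).pow 2
  have hKne : (Set.Icc (0 : Fin n → ℝ) 1).Nonempty := ⟨0, Set.left_mem_Icc.2 zero_le_one⟩
  obtain ⟨α₀, hα₀K, hmax⟩ := isCompact_Icc.exists_isMaxOn hKne hFcont.continuousOn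
  have hα₀K' : ∀ k, 0 ≤ α₀ k ∧ α₀ k ≤ 1 := by
    rw [Set.mem_Icc] at hα₀K
    exact fun k => ⟨hα₀K.1 k, hα₀K.2 k⟩
  set w : Fin m → ℝ := fun j => ∑ k, y k * α₀ k * Φ k j with hw
  -- per coordinate: interior and stationarity
  have hcoord : ∀ i : Fin n, α₀ i ∈ Set.Ioo (0:ℝ) 1 ∧
      Real.log (1 - α₀ i) - Real.log (α₀ i) = (∑ j, w j * (y i * Φ i j)) / lam := by
    intro i
    set a : ℝ := α₀ i with haa
    set Sb : ℝ := ∑ j, (y i * Φ i j)^2 with hSb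
    set Swb : ℝ := ∑ j, w j * (y i * Φ i j) with hSwb
    set Sww : ℝ := ∑ j, w j ^2 with hSww
    have hupK : ∀ s ∈ Set.Icc (0:ℝ) 1, Function.update α₀ i s ∈ Set.Icc (0:Fin n → ℝ) 1 := by
      intro s hs
      rw [Set.mem_Icc]
      constructor <;> intro k <;> rcases eq_or_ne k i with rfl | hk
      · rw [Pi.zero_apply, Function.update_self]; exact hs.1
      · rw [Pi.zero_apply, Function.update_of_ne hk]; exact (hα₀K' k).1
      · rw [Pi.one_apply, Function.update_self]; exact hs.2
      · rw [Pi.one_apply, Function.update_of_ne hk]; exact (hα₀K' k).2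
    have hin : ∀ s j, (∑ k, y k * (Function.update α₀ i s) k * Φ k j)
        = w j + (s - a) * (y i * Φ i j) := by
      intro s j
      have h1 : ∀ v : Fin n → ℝ, (∑ k, y k * v k * Φ k j)
          = y i * v i * Φ i j + ∑ k ∈ Finset.univ.erase i, y k * v k * Φ k j :=
        fun v => (Finset.add_sum_erase _ (fun k => y k * v k * Φ k j) (Finset.mem_univ i)).symm
      have h2 : w j = y i * α₀ i * Φ i j + ∑ k ∈ Finset.univ.erase i, y k * α₀ k * Φ k j := by
        rw [hw]; exact h1 α₀
      rw [h1, h2, Function.update_self]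
      have h3 : ∑ k ∈ Finset.univ.erase i, y k * (Function.update α₀ i s) k * Φ k j
          = ∑ k ∈ Finset.univ.erase i, y k * α₀ k * Φ k j := by
        refine Finset.sum_congr rfl fun k hk => ?_
        rw [Function.update_of_ne (Finset.ne_of_mem_erase hk)]
      rw [h3, haa]; ring
    have hquad : ∀ s, (∑ j, (∑ k, y k * (Function.update α₀ i s) k * Φ k j)^2)
        = Sww + 2*(s-a)*Swb + (s-a)^2*Sb := by
      intro s
      have he : ∀ j, (∑ k, y k * (Function.update α₀ i s) k * Φ k j)^2
          = w j^2 + (2*(s-a))*(w j * (y i * Φ i j)) + (s-a)^2 * (y i * Φ i j)^2 := by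
        intro j; rw [hin s j]; ring
      rw [Finset.sum_congr rfl fun j _ => he j]
      rw [Finset.sum_add_distrib, Finset.sum_add_distrib, ← Finset.mul_sum, ← Finset.mul_sum]
    have hent : ∀ s, (∑ k, Hb ((Function.update α₀ i s) k))
        = Hb s + ∑ k ∈ Finset.univ.erase i, Hb (α₀ k) := by
      intro s
      have h1 : ∀ k, Hb (Function.update α₀ i s k)
          = Function.update (fun k => Hb (α₀ k)) i (Hb s) k :=
        fun k => Function.apply_update (fun _ x => Hb x) α₀ i s k
      rw [Finset.sum_congr rfl fun k _ => h1 k,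
        Finset.sum_update_of_mem (Finset.mem_univ i), Finset.erase_eq]
    set A : ℝ := Sb/(2*lam) with hA'
    set B : ℝ := (2*Swb - 2*a*Sb)/(2*lam) with hB'
    set C : ℝ := (∑ k ∈ Finset.univ.erase i, Hb (α₀ k)) - (Sww - 2*a*Swb + a^2*Sb)/(2*lam)
      with hC'
    have hψ : ∀ s, F (Function.update α₀ i s) = Hb s - (A*s^2 + B*s) + C := by
      intro s
      rw [hF]
      simp only
      rw [hent s, hquad s, hA', hB', hC']
      field_simp
      ring
    have hψmax : ∀ s ∈ Set.Icc (0:ℝ) 1,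
        Hb s - (A*s^2 + B*s) + C ≤ Hb a - (A*a^2 + B*a) + C := by
      intro s hs
      rw [← hψ s, ← hψ a]
      have : Function.update α₀ i a = α₀ := by rw [haa]; exact Function.update_eq_self i α₀
      rw [this]
      exact hmax (hupK s hs)
    have hAnn : 0 ≤ A := by
      rw [hA', hSb]
      apply div_nonneg _ (by linarith)
      exact Finset.sum_nonneg fun j _ => sq_nonneg _
    have haI : a ∈ Set.Ioo (0:ℝ) 1 := by
      have h01 := hα₀K' i
      rcases eq_or_lt_of_le h01.1 with h | h
      · exfalso
        obtain ⟨s, hsI, hlt⟩ := bdry0 A B hAnn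
        have hth := hψmax s (Set.Ioo_subset_Icc_self hsI)
        have hae : a = 0 := haa.trans h.symm
        rw [hae] at hth
        linarith
      rcases eq_or_lt_of_le h01.2 with h' | h'
      · exfalso
        obtain ⟨s, hsI, hlt⟩ := bdry1 A B hAnn
        have hth := hψmax s (Set.Ioo_subset_Icc_self hsI)
        have hae : a = 1 := haa.trans h'
        rw [hae] at hth
        linarith
      exact ⟨h, h'⟩
    have hloc : IsLocalMax (fun s => Hb s - (A*s^2 + B*s) + C) a :=
      Filter.eventually_of_mem (Icc_mem_nhds haI.1 haI.2) hψmax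
    have hd : HasDerivAt (fun s => Hb s - (A*s^2+B*s) + C)
        (Real.log (1-a) - Real.log a - (2*A*a + B)) a := by
      have d1 := Hb_deriv a haI
      have d2 : HasDerivAt (fun s : ℝ => A*s^2 + B*s) (2*A*a + B) a := by
        have p1 : HasDerivAt (fun s : ℝ => s^2) (2*a) a := by
          simpa using hasDerivAt_pow 2 a
        have := (p1.const_mul A).add ((hasDerivAt_id a).const_mul B)
        exact this.congr_deriv (by ring)
      exact (d1.sub d2).add_const C
    have hzero := hloc.hasDerivAt_eq_zero hd
    refine ⟨haI, ?_⟩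
    have hst : Real.log (1-a) - Real.log a = 2*A*a + B := by linarith
    rw [hst, hA', hB']
    field_simp
    ring
  -- definitions of θ₀
  set θ₀ : Fin m → ℝ := fun j => w j / lam with hθ₀
  have ht : ∀ i, y i * (Φ *ᵥ θ₀) i = Real.log (1 - α₀ i) - Real.log (α₀ i) := by
    intro i
    rw [(hcoord i).2]
    simp only [Matrix.mulVec, dotProduct, hθ₀]
    rw [Finset.sum_div, Finset.mul_sum]
    refine Finset.sum_congr rfl fun j _ => ?_
    field_simp
  have hswap : ∀ θ : Fin m → ℝ, (∑ i, α₀ i * (y i * (Φ *ᵥ θ) i)) = ∑ j, w j * θ j := by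
    intro θ
    simp only [Matrix.mulVec, dotProduct]
    have h1 : ∀ i, α₀ i * (y i * ∑ j, Φ i j * θ j) = ∑ j, y i * α₀ i * Φ i j * θ j := by
      intro i
      rw [Finset.mul_sum, Finset.mul_sum]
      exact Finset.sum_congr rfl fun j _ => by ring
    rw [Finset.sum_congr rfl fun i _ => h1 i, Finset.sum_comm]
    refine Finset.sum_congr rfl fun j _ => ?_
    rw [hw, Finset.sum_mul]
  -- main equality
  have hLdef : ∀ θ, L θ = (∑ i, Real.log (1 + Real.exp (-(y i * (Φ *ᵥ θ) i)))) +
      lam/2 * ∑ j, θ j ^2 := fun θ => rfl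
  have hsum1 : (∑ i, Real.log (1 + Real.exp (-(y i * (Φ *ᵥ θ₀) i))))
      = (∑ i, Hb (α₀ i)) - ∑ j, w j * θ₀ j := by
    have h1 : ∀ i, Real.log (1 + Real.exp (-(y i * (Φ *ᵥ θ₀) i)))
        = Hb (α₀ i) - α₀ i * (y i * (Φ *ᵥ θ₀) i) := by
      intro i
      rw [ht i, fenchel_eq (α₀ i) (hcoord i).1, ← ht i]
    rw [Finset.sum_congr rfl fun i _ => h1 i, Finset.sum_sub_distrib, hswap θ₀]
  have hwθ : ∑ j, w j * θ₀ j = (∑ j, w j ^ 2) / lam := by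
    rw [Finset.sum_div]
    refine Finset.sum_congr rfl fun j _ => ?_
    rw [hθ₀]
    field_simp
  have hθsq : ∑ j, θ₀ j ^ 2 = (∑ j, w j ^ 2) / lam^2 := by
    rw [Finset.sum_div]
    refine Finset.sum_congr rfl fun j _ => ?_
    rw [hθ₀]
    field_simp
  have hGα₀ : G α₀ = (∑ i, Hb (α₀ i)) - 1/(2*lam) * ∑ j, w j ^ 2 := by
    rw [hGF, hF]
  have hLG : L θ₀ = G α₀ := by
    rw [hLdef, hsum1, hwθ, hθsq, hGα₀]
    field_simp
    ring
  -- weak duality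
  have hweak : ∀ θ : Fin m → ℝ, G α₀ ≤ L θ := by
    intro θ
    have h1 : ∀ i, Hb (α₀ i) - α₀ i * (y i * (Φ *ᵥ θ) i)
        ≤ Real.log (1 + Real.exp (-(y i * (Φ *ᵥ θ) i))) :=
      fun i => fenchel _ _ (hcoord i).1
    have hs1 : ∑ i, (Hb (α₀ i) - α₀ i * (y i * (Φ *ᵥ θ) i))
        ≤ ∑ i, Real.log (1 + Real.exp (-(y i * (Φ *ᵥ θ) i))) :=
      Finset.sum_le_sum fun i _ => h1 i
    rw [Finset.sum_sub_distrib, hswap θ] at hs1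
    have h2 : ∑ j, w j * θ j ≤ lam/2 * ∑ j, θ j^2 + 1/(2*lam) * ∑ j, w j^2 := by
      rw [Finset.mul_sum, Finset.mul_sum, ← Finset.sum_add_distrib]
      refine Finset.sum_le_sum fun j _ => ?_
      have hsq := sq_nonneg (lam * θ j - w j)
      have he : lam/2 * θ j^2 + 1/(2*lam) * w j^2 - w j * θ j
          = (lam * θ j - w j)^2 / (2*lam) := by
        field_simp
        ring
      have hnn : 0 ≤ (lam * θ j - w j)^2 / (2*lam) := div_nonneg hsq (by linarith)
      linarith
    rw [hLdef θ, hGα₀]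
    linarith
  refine ⟨θ₀, α₀, ⟨⟨θ₀, rfl⟩, ?_⟩, fun i => (hcoord i).1, ⟨⟨α₀, fun i => (hcoord i).1, rfl⟩, ?_⟩, hLG⟩
  · rintro x ⟨θ, rfl⟩
    rw [hLG]
    exact hweak θ
  · rintro x ⟨α, hα, rfl⟩
    rw [hGF, hGF]
    refine hmax ?_
    rw [Set.mem_Icc]
    exact ⟨fun k => (hα k).1.le, fun k => (hα k).2.le⟩
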